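/- Let P ∈ R^{k×p} have columns of unit ℓ2-norm and let Ω_P(w) = ‖P·Diag(w)‖_*. The dual norm Ω_P*(u) = max{uᵀv : Ω_P(v) ≤ 1} satisfies Ω_P*(u) ≤ ‖P·Diag(u)‖_{op} for all u ∈ R^p. -/

import Mathlib

noncomputable def traceNorm {n p : ℕ} (M : Matrix (Fin n) (Fin p) ℝ) : ℝ :=
  ((Matrix.posSemidef_conjTranspose_mul_self M).1.eigenvectorUnitary.1 *
    Matrix.diagonal ((RCLike.ofReal : ℝ → ℝ) ∘ (√·) ∘ (Matrix.posSemidef_conjTranspose_mul_self M).1.eigenvalues) *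
    (star (Matrix.posSemidef_conjTranspose_mul_self M).1.eigenvectorUnitary :
      Matrix (Fin p) (Fin p) ℝ)).trace

noncomputable def opNorm {k p : ℕ} (M : Matrix (Fin k) (Fin p) ℝ) : ℝ :=
  ‖LinearMap.toContinuousLinearMap (Matrix.toEuclideanLin M)‖

lemma traceNorm_eq_sum {n p : ℕ} (M : Matrix (Fin n) (Fin p) ℝ) :
    traceNorm M =
      ∑ i, Real.sqrt ((Matrix.posSemidef_conjTranspose_mul_self M).1.eigenvalues i) := by
  unfold traceNorm
  rw [Matrix.trace_mul_cycle,
    Matrix.mem_unitaryGroup_iff'.mp (Matrix.IsHermitian.eigenvectorUnitary _).2, Matrix.one_mul,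
    Matrix.trace_diagonal]
  simp

open Matrix in
lemma trace_le_opNorm_mul_traceNorm {k p : ℕ} (A B : Matrix (Fin k) (Fin p) ℝ) :
    (Aᵀ * B).trace ≤ opNorm A * traceNorm B := by
  classical
  set hH := (Matrix.posSemidef_conjTranspose_mul_self B).1 with hHdef
  set c : Fin p → Fin p → ℝ := fun i => ⇑(hH.eigenvectorBasis i) with hc
  -- orthonormality of the rows of c (columns of the unitary)
  have horth : ∀ a b, ∑ i, c i a * c i b = if a = b then 1 else 0 := by
    intro a b
    have h1 : (hH.eigenvectorUnitary : Matrix (Fin p) (Fin p) ℝ) *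
        star (hH.eigenvectorUnitary : Matrix (Fin p) (Fin p) ℝ) = 1 :=
      Matrix.mem_unitaryGroup_iff.mp hH.eigenvectorUnitary.2
    have := congr_fun (congr_fun h1 a) b
    simpa [Matrix.mul_apply, Matrix.star_apply, Matrix.one_apply, hc] using this
  -- trace as sum over the orthonormal basis
  have key : (Aᵀ * B).trace = ∑ i, (A *ᵥ c i) ⬝ᵥ (B *ᵥ c i) := by
    have : ∀ i, (A *ᵥ c i) ⬝ᵥ (B *ᵥ c i)
        = ∑ m, ∑ a, ∑ b, A m a * B m b * (c i a * c i b) := by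
      intro i
      simp only [dotProduct, Matrix.mulVec, Finset.sum_mul_sum]
      refine Finset.sum_congr rfl fun m _ => ?_
      refine Finset.sum_congr rfl fun a _ => Finset.sum_congr rfl fun b _ => ?_
      ring
    simp only [this]
    rw [Finset.sum_comm]
    have : ∀ m, ∑ i, ∑ a, ∑ b, A m a * B m b * (c i a * c i b)
        = ∑ a, A m a * B m a := by
      intro m
      rw [Finset.sum_comm]
      refine Finset.sum_congr rfl fun a _ => ?_
      rw [Finset.sum_comm]
      have : ∀ b, ∑ i, A m a * B m b * (c i a * c i b)
          = A m a * B m b * (if a = b then 1 else 0) := by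
        intro b
        rw [← horth a b, Finset.mul_sum]
      simp only [this]
      simp
    simp only [this]
    simp only [Matrix.trace, Matrix.diag, Matrix.mul_apply, Matrix.transpose_apply]
    exact Finset.sum_comm
  rw [key, traceNorm_eq_sum, ← hHdef, Finset.mul_sum]
  refine Finset.sum_le_sum fun i _ => ?_
  set x : EuclideanSpace ℝ (Fin k) := (WithLp.equiv 2 (Fin k → ℝ)).symm (A *ᵥ c i) with hx
  set y : EuclideanSpace ℝ (Fin k) := (WithLp.equiv 2 (Fin k → ℝ)).symm (B *ᵥ c i) with hy
  have hnorm1 : ‖hH.eigenvectorBasis i‖ = 1 := hH.eigenvectorBasis.orthonormal.1 i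
  have hdotc : c i ⬝ᵥ c i = 1 := by
    have h3 := real_inner_self_eq_norm_sq (hH.eigenvectorBasis i)
    rw [hnorm1, PiLp.inner_apply] at h3
    simpa [RCLike.inner_apply, dotProduct, hc, pow_two] using h3
  have hdotB : (B *ᵥ c i) ⬝ᵥ (B *ᵥ c i) = hH.eigenvalues i := by
    have h1 : c i ⬝ᵥ ((Bᴴ * B) *ᵥ c i) = (B *ᵥ c i) ⬝ᵥ (B *ᵥ c i) := by
      rw [← Matrix.mulVec_mulVec, Matrix.dotProduct_mulVec]
      congr 1
      rw [Matrix.conjTranspose_eq_transpose_of_trivial, Matrix.vecMul_transpose]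
    have h2 : (Bᴴ * B) *ᵥ c i = hH.eigenvalues i • c i := hH.mulVec_eigenvectorBasis i
    rw [← h1, h2, dotProduct_smul, hdotc]
    simp
  have hcs : (A *ᵥ c i) ⬝ᵥ (B *ᵥ c i) ≤ ‖x‖ * ‖y‖ := by
    have h4 := real_inner_le_norm x y
    simpa [hx, hy, PiLp.inner_apply, RCLike.inner_apply, dotProduct, mul_comm] using h4
  have hxa : ‖x‖ ≤ opNorm A := by
    have h5 := (LinearMap.toContinuousLinearMap (Matrix.toEuclideanLin A)).le_opNorm
      ((WithLp.equiv 2 (Fin p → ℝ)).symm (c i))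
    have h6 : ‖WithLp.toLp 2 (c i)‖ = 1 := by
      simpa [hc] using hnorm1
    simpa [opNorm, h6, hx] using h5
  have hyb : ‖y‖ = Real.sqrt (hH.eigenvalues i) := by
    rw [← hdotB, hy, EuclideanSpace.norm_eq]
    congr 1
    simp [dotProduct, Real.norm_eq_abs, sq_abs, pow_two]
  calc (A *ᵥ c i) ⬝ᵥ (B *ᵥ c i) ≤ ‖x‖ * ‖y‖ := hcs
    _ ≤ opNorm A * ‖y‖ := mul_le_mul_of_nonneg_right hxa (norm_nonneg y)
    _ = opNorm A * Real.sqrt (hH.eigenvalues i) := by rw [hyb]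


open Matrix in
lemma sum_eq_trace {k p : ℕ} (P : Matrix (Fin k) (Fin p) ℝ)
    (hP : ∀ i : Fin p, ∑ j, P j i ^ 2 = 1) (u v : Fin p → ℝ) :
    ∑ i, u i * v i = ((P * Matrix.diagonal u)ᵀ * (P * Matrix.diagonal v)).trace := by
  simp only [Matrix.trace, Matrix.diag, Matrix.mul_apply, Matrix.transpose_apply,
    Matrix.diagonal_apply, mul_ite, mul_zero, ite_mul, zero_mul, Finset.sum_ite_eq, Finset.sum_ite_eq',
    Finset.mem_univ, if_true]
  refine Finset.sum_congr rfl fun j _ => ?_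
  have h : ∑ m, P m j * u j * (P m j * v j) = (u j * v j) * ∑ m, P m j ^ 2 := by
    rw [Finset.mul_sum]; exact Finset.sum_congr rfl fun m _ => by ring
  rw [h, hP j, mul_one]

theorem dual_norm_le_opNorm {k p : ℕ} (P : Matrix (Fin k) (Fin p) ℝ)
    (hP : ∀ i : Fin p, ∑ j, P j i ^ 2 = 1) (u : Fin p → ℝ) :
    sSup {x : ℝ | ∃ v : Fin p → ℝ,
        traceNorm (P * Matrix.diagonal v) ≤ 1 ∧ x = ∑ i, u i * v i} ≤
      opNorm (P * Matrix.diagonal u) := by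
  refine Real.sSup_le ?_ (norm_nonneg _)
  rintro x ⟨v, hv, rfl⟩
  calc ∑ i, u i * v i
      = ((P * Matrix.diagonal u).transpose * (P * Matrix.diagonal v)).trace := sum_eq_trace P hP u v
    _ ≤ opNorm (P * Matrix.diagonal u) * traceNorm (P * Matrix.diagonal v) :=
        trace_le_opNorm_mul_traceNorm _ _
    _ ≤ opNorm (P * Matrix.diagonal u) * 1 :=
        mul_le_mul_of_nonneg_left hv (norm_nonneg _)
    _ = opNorm (P * Matrix.diagonal u) := mul_one _
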